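/- arXiv:1004.4223 — 3 statements merged into one kernel-verified Lean document; each statement's English description precedes it below -/
import Mathlib

section
/- Let f : ℝ → ℝ be a function with f(0) = f(r) = 0, f(x) ≥ 0 on (0,r), f(x*) ≥ M for some x* ∈ (0,r), and |f'(x)| ≤ m everywhere (with m > 0, M > 0). Then ∫₀^r f(x) dx ≥ M²/m. -/
open intervalIntegral Set

theorem triangle_lower_bound (f : ℝ → ℝ) (r M m xstar : ℝ)
    (hr : 0 < r) (hM : 0 < M) (hm : 0 < m)
    (hf : ContDiff ℝ 1 f)
    (h0 : f 0 = 0) (hfr : f r = 0)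
    (hpos : ∀ x ∈ Set.Ioo (0:ℝ) r, 0 ≤ f x)
    (hxstar : xstar ∈ Set.Ioo (0:ℝ) r)
    (hMle : M ≤ f xstar)
    (hderiv : ∀ x, |deriv f x| ≤ m) :
    M ^ 2 / m ≤ ∫ x in (0:ℝ)..r, f x := by
  have hdiff : Differentiable ℝ f := hf.differentiable one_ne_zero
  have hcont : Continuous f := hdiff.continuous
  have hlip : ∀ x y : ℝ, |f y - f x| ≤ m * |y - x| := by
    intro x y
    have := Convex.norm_image_sub_le_of_norm_deriv_le (s := (Set.univ : Set ℝ))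
      (fun z _ => hdiff z) (fun z _ => hderiv z) convex_univ (mem_univ x) (mem_univ y)
    simpa [Real.norm_eq_abs] using this
  obtain ⟨hx0, hxr⟩ := hxstar
  -- xstar is at least M/m from the left endpoint and right endpoint
  have hxl : M / m ≤ xstar := by
    have := hlip 0 xstar
    rw [h0, sub_zero, sub_zero, abs_of_pos hx0] at this
    have : M ≤ m * xstar := le_trans hMle (le_trans (le_abs_self _) this)
    rw [div_le_iff₀ hm]; linarith
  have hxr' : xstar + M / m ≤ r := by
    have := hlip r xstar
    rw [hfr, sub_zero, abs_sub_comm, abs_of_pos (by linarith : (0:ℝ) < r - xstar)] at this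
    have : M ≤ m * (r - xstar) := le_trans hMle (le_trans (le_abs_self _) this)
    have h2 : M / m ≤ r - xstar := by rw [div_le_iff₀ hm]; linarith
    linarith
  set a := xstar - M / m with ha
  set b := xstar + M / m with hb
  have hMm : 0 < M / m := div_pos hM hm
  have ha0 : 0 ≤ a := by simpa [ha] using sub_nonneg.2 hxl
  have hbr : b ≤ r := hxr'
  have hax : a ≤ xstar := by simp [ha]; linarith
  have hxb : xstar ≤ b := by simp [hb]; linarith
  have hnn : ∀ x ∈ Set.Icc (0:ℝ) r, 0 ≤ f x := by
    intro x hx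
    rcases eq_or_lt_of_le hx.1 with h | h
    · simp [← h, h0]
    rcases eq_or_lt_of_le hx.2 with h' | h'
    · simp [h', hfr]
    exact hpos x ⟨h, h'⟩
  have hint : ∀ u v : ℝ, IntervalIntegrable f MeasureTheory.volume u v :=
    fun u v => hcont.intervalIntegrable u v
  -- lower bounds on the triangle
  have hlow1 : ∀ x ∈ Set.Icc a xstar, M - m * (xstar - x) ≤ f x := by
    intro x hx
    have := hlip x xstar
    rw [abs_of_nonneg (by linarith [hx.2] : (0:ℝ) ≤ xstar - x)] at this
    have h2 : f xstar - f x ≤ m * (xstar - x) := le_trans (le_abs_self _) this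
    linarith
  have hlow2 : ∀ x ∈ Set.Icc xstar b, M - m * (x - xstar) ≤ f x := by
    intro x hx
    have := hlip xstar x
    rw [abs_of_nonneg (by linarith [hx.1] : (0:ℝ) ≤ x - xstar)] at this
    have h2 : f xstar - f x ≤ m * (x - xstar) := by
      have := neg_abs_le (f x - f xstar); linarith [le_abs_self (f x - f xstar)]
    linarith
  have hc1 : Continuous fun x : ℝ => M - m * (xstar - x) := by continuity
  have hc2 : Continuous fun x : ℝ => M - m * (x - xstar) := by continuity
  have hI1 : M ^ 2 / (2 * m) ≤ ∫ x in a..xstar, f x := by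
    have hmono := intervalIntegral.integral_mono_on hax
      (hc1.intervalIntegrable a xstar) (hint a xstar) hlow1
    have hval : (∫ x in a..xstar, (M - m * (xstar - x))) = M ^ 2 / (2 * m) := by
      have heq : (fun x : ℝ => M - m * (xstar - x)) = fun x => (M - m * xstar) + m * x := by
        funext x; ring
      rw [heq, intervalIntegral.integral_add (g := fun x => m * x) (intervalIntegrable_const)
        ((continuous_const.mul continuous_id').intervalIntegrable a xstar),
        intervalIntegral.integral_const, intervalIntegral.integral_const_mul, integral_id]
      simp only [smul_eq_mul, ha]
      field_simp
      ring
    linarith [hmono, hval.symm.le]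
  have hI2 : M ^ 2 / (2 * m) ≤ ∫ x in xstar..b, f x := by
    have hmono := intervalIntegral.integral_mono_on hxb
      (hc2.intervalIntegrable xstar b) (hint xstar b) hlow2
    have hval : (∫ x in xstar..b, (M - m * (x - xstar))) = M ^ 2 / (2 * m) := by
      have heq : (fun x : ℝ => M - m * (x - xstar)) = fun x => (M + m * xstar) + (-m) * x := by
        funext x; ring
      rw [heq, intervalIntegral.integral_add (g := fun x => (-m) * x) (intervalIntegrable_const)
        ((continuous_const.mul continuous_id').intervalIntegrable xstar b),
        intervalIntegral.integral_const, intervalIntegral.integral_const_mul, integral_id]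
      simp only [smul_eq_mul, hb]
      field_simp
      ring
    linarith [hmono, hval.symm.le]
  have hsplit : (∫ x in (0:ℝ)..a, f x) + (∫ x in a..xstar, f x) + (∫ x in xstar..b, f x)
      + (∫ x in b..r, f x) = (∫ x in (0:ℝ)..r, f x) := by
    rw [intervalIntegral.integral_add_adjacent_intervals (hint 0 a) (hint a xstar),
      intervalIntegral.integral_add_adjacent_intervals (hint 0 xstar) (hint xstar b),
      intervalIntegral.integral_add_adjacent_intervals (hint 0 b) (hint b r)]
  have hnn1 : 0 ≤ ∫ x in (0:ℝ)..a, f x := by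
    apply intervalIntegral.integral_nonneg ha0
    intro x hx
    exact hnn x ⟨hx.1, le_trans hx.2 (le_trans hax (le_trans hxb hbr))⟩
  have hnn2 : 0 ≤ ∫ x in b..r, f x := by
    apply intervalIntegral.integral_nonneg hbr
    intro x hx
    exact hnn x ⟨le_trans (le_trans ha0 (le_trans hax hxb)) hx.1, hx.2⟩
  have htot : M ^ 2 / (2 * m) + M ^ 2 / (2 * m) = M ^ 2 / m := by
    field_simp; ring
  linarith [hsplit, hI1, hI2, hnn1, hnn2]
end

section
/- Given k points x₁,...,x_k ∈ ℝ with k ≥ 2, whose maximum pairwise distance is Δ > 0, there exists a bipartition of the set into nonempty sets A and B such that the distance between A and B (minimum over a ∈ A, b ∈ B of |a - b|) is at least Δ/2^(k-2). -/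
theorem bipartition_gap (k : ℕ) (hk : 2 ≤ k) (x : Fin k → ℝ) (Δ : ℝ) (hΔ : 0 < Δ)
    (hmax : ∀ i j, |x i - x j| ≤ Δ)
    (hattain : ∃ i j, |x i - x j| = Δ) :
    ∃ S : Finset (Fin k), S.Nonempty ∧ Sᶜ.Nonempty ∧
      ∀ i ∈ S, ∀ j ∈ Sᶜ, Δ / 2 ^ (k - 2) ≤ |x i - x j| := by
  have hk0 : 0 < k := by omega
  set g := Δ / 2 ^ (k - 2) with hg
  have hgpos : 0 < g := by positivity
  have hkg : ((k : ℝ) - 1) * g ≤ Δ := by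
    have h1 : (k - 1 : ℕ) ≤ 2 ^ (k - 2) := by
      obtain ⟨m, rfl⟩ : ∃ m, k = m + 2 := ⟨k - 2, by omega⟩
      simpa using Nat.lt_two_pow_self (n := m)
    have h1' : ((k : ℝ) - 1) ≤ 2 ^ (k - 2) := by
      have := (Nat.cast_le (α := ℝ)).mpr h1
      push_cast at this
      have : ((k : ℝ) - 1) ≤ ((k - 1 : ℕ) : ℝ) := by
        push_cast [Nat.cast_sub (by omega : 1 ≤ k)]; ring_nf; rfl
      calc ((k : ℝ) - 1) ≤ ((k - 1 : ℕ) : ℝ) := this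
        _ ≤ 2 ^ (k - 2) := by exact_mod_cast h1
    rw [hg, div_eq_mul_inv]
    rw [mul_comm Δ _, ← mul_assoc]
    have h2 : (0:ℝ) < 2 ^ (k-2) := by positivity
    calc ((k:ℝ)-1) * (2 ^ (k-2))⁻¹ * Δ ≤ 2 ^ (k-2) * (2 ^ (k-2))⁻¹ * Δ := by
          apply mul_le_mul_of_nonneg_right (mul_le_mul_of_nonneg_right h1' (by positivity)) hΔ.le
      _ = Δ := by field_simp
  set σ := Tuple.sort x with hσ
  have hmono : Monotone (x ∘ σ) := Tuple.monotone_sort x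
  set f : ℕ → ℝ := fun n => x (σ ⟨min n (k - 1), by omega⟩) with hf
  have hfmono : Monotone f := by
    intro a b hab
    exact hmono (by simp [Fin.mk_le_mk]; omega)
  have hfeq : ∀ i : Fin k, x i = f ((σ.symm i : Fin k) : ℕ) := by
    intro i
    have hlt := (σ.symm i).isLt
    have h1 : (⟨min ((σ.symm i : Fin k) : ℕ) (k - 1), by omega⟩ : Fin k) = σ.symm i := by
      ext
      simp only
      omega
    simp only [hf]
    rw [h1, Equiv.apply_symm_apply]
  have hspan : Δ ≤ f (k - 1) - f 0 := by
    obtain ⟨a, b, hab⟩ := hattain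
    have hub : ∀ i : Fin k, x i ≤ f (k - 1) := by
      intro i
      rw [hfeq i]
      exact hfmono (by omega)
    have hlb : ∀ i : Fin k, f 0 ≤ x i := by
      intro i
      rw [hfeq i]
      exact hfmono (by omega)
    rcases abs_cases (x a - x b) with ⟨h, _⟩ | ⟨h, _⟩
    · have := hub a; have := hlb b; linarith [hab ▸ h]
    · have := hub b; have := hlb a; linarith [hab ▸ h]
  have hex : ∃ n < k - 1, g ≤ f (n + 1) - f n := by
    by_contra h
    push_neg at h
    have hsum : f (k - 1) - f 0 < ((k : ℝ) - 1) * g := by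
      have hT := Finset.sum_range_sub f (k - 1)
      have hne : (Finset.range (k - 1)).Nonempty := ⟨0, by simp; omega⟩
      have : ∑ i ∈ Finset.range (k - 1), (f (i + 1) - f i) <
          ∑ _i ∈ Finset.range (k - 1), g :=
        Finset.sum_lt_sum_of_nonempty hne fun i hi => h i (Finset.mem_range.mp hi)
      rw [hT] at this
      simpa [Finset.sum_const, nsmul_eq_mul, Nat.cast_sub (by omega : 1 ≤ k)] using this
    linarith
  obtain ⟨n, hn, hgap⟩ := hex
  refine ⟨Finset.univ.filter (fun i => x i ≤ f n), ?_, ?_, ?_⟩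
  · refine ⟨σ ⟨n, by omega⟩, ?_⟩
    simp only [Finset.mem_filter, Finset.mem_univ, true_and]
    have : f n = x (σ ⟨n, by omega⟩) := by
      simp only [hf]
      congr 2
      ext; simp; omega
    rw [this]
  · refine ⟨σ ⟨n + 1, by omega⟩, ?_⟩
    simp only [Finset.mem_compl, Finset.mem_filter, Finset.mem_univ, true_and, not_le]
    have h1 : x (σ ⟨n + 1, by omega⟩) = f (n + 1) := by
      simp only [hf]
      congr 2
      ext; simp; omega
    rw [h1]; linarith
  · intro i hi j hj
    simp only [Finset.mem_filter, Finset.mem_univ, true_and] at hi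
    simp only [Finset.mem_compl, Finset.mem_filter, Finset.mem_univ, true_and, not_le] at hj
    have hjge : f (n + 1) ≤ x j := by
      rw [hfeq j] at hj ⊢
      by_contra hc
      push_neg at hc
      have hm : ((σ.symm j : Fin k) : ℕ) ≤ n := by
        by_contra hm'
        push_neg at hm'
        exact absurd (hfmono hm') (not_le.mpr hc)
      exact absurd (hfmono hm) (not_le.mpr hj)
    have : g ≤ x j - x i := by linarith
    rw [abs_sub_comm, abs_of_nonneg (by linarith)]
    linarith
end

section
/- Given k strictly positive reals x₁,...,x_k (k ≥ 2) whose maximum ratio of any two is C > 1, there exists a bipartition into nonempty sets A and B such that for all x_i ∈ A and x_j ∈ B, x_i / x_j ≥ C^(1/2^k). -/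
theorem bipartition_ratio (k : ℕ) (hk : 2 ≤ k) (x : Fin k → ℝ) (C : ℝ) (hC : 1 < C)
    (hpos : ∀ i, 0 < x i)
    (hmax : ∀ i j, x i / x j ≤ C)
    (hattain : ∃ i j, x i / x j = C) :
    ∃ S : Finset (Fin k), S.Nonempty ∧ Sᶜ.Nonempty ∧
      ∀ i ∈ S, ∀ j ∈ Sᶜ, C ^ ((1:ℝ) / 2 ^ k) ≤ x i / x j := by
  obtain ⟨imax, imin, hCmax⟩ := hattain
  have hC0 : (0:ℝ) < C := lt_trans one_pos hC
  set g : ℝ := C ^ ((1:ℝ) / 2 ^ k) with hg_def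
  have hp : (0:ℝ) < (1:ℝ) / 2 ^ k := by positivity
  have hg1 : 1 < g := (Real.one_lt_rpow_iff_of_pos hC0).mpr (Or.inl ⟨hC, hp⟩)
  have hg0 : (0:ℝ) < g := lt_trans one_pos hg1
  have hgC : g ^ ((2:ℝ) ^ k) = C := by
    rw [hg_def, ← Real.rpow_mul hC0.le, one_div_mul_cancel (by positivity), Real.rpow_one]
  -- imax is the max, imin the min
  have hMeq : x imax = C * x imin :=
    (div_eq_iff (hpos imin).ne').mp hCmax
  have hlow : ∀ t, x imin ≤ x t := by
    intro t
    have h1 : x imax ≤ C * x t := (div_le_iff₀ (hpos t)).mp (hmax imax t)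
    rw [hMeq] at h1
    exact le_of_mul_le_mul_left h1 hC0
  have hhigh : ∀ t, x t ≤ x imax := by
    intro t
    have h1 : x t ≤ C * x imin := (div_le_iff₀ (hpos imin)).mp (hmax t imin)
    rw [hMeq]; exact h1
  set m := x imin with hm_def
  have hm0 : 0 < m := hpos imin
  set y : Fin k → ℝ := fun t => x t / m with hy_def
  have hy0 : ∀ t, 0 < y t := fun t => div_pos (hpos t) hm0
  have hy1 : ∀ t, 1 ≤ y t := fun t => (one_le_div hm0).mpr (hlow t)
  set L : Fin k → ℝ := fun t => Real.logb g (y t) with hL_def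
  have hL0 : ∀ t, 0 ≤ L t := fun t => Real.logb_nonneg hg1 (hy1 t)
  have hyinv : ∀ t, g ^ (L t) = y t := fun t =>
    Real.rpow_logb hg0 (ne_of_gt hg1) (hy0 t)
  have hLmax : L imax = (2:ℝ) ^ k := by
    have : y imax = C := by rw [hy_def]; exact hCmax
    rw [hL_def]; simp only [this, ← hgC]
    exact Real.logb_rpow hg0 (ne_of_gt hg1)
  have hLmin : L imin = 0 := by
    have : y imin = 1 := by rw [hy_def]; field_simp; rfl
    rw [hL_def]; simp [this]
  have hLC : ∀ t, L t ≤ (2:ℝ) ^ k := by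
    intro t
    rw [← hLmax]
    exact Real.logb_le_logb_of_le hg1 (hy0 t) ((div_le_div_iff_of_pos_right hm0).mpr (hhigh t))
  -- floor buckets
  have hfl2 : ⌊(2:ℝ)^k⌋ = (2:ℤ)^k := by
    rw [show ((2:ℝ)^k) = (((2:ℤ)^k : ℤ) : ℝ) by push_cast; ring, Int.floor_intCast]
  have hfloor_le : ∀ t, ⌊L t⌋ ≤ (2:ℤ) ^ k := by
    intro t
    have h2 := Int.floor_le_floor (R := ℝ) (hLC t)
    rwa [hfl2] at h2
  have hfmax : ⌊L imax⌋ = (2:ℤ) ^ k := by rw [hLmax, hfl2]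
  have hfmin : ⌊L imin⌋ = 0 := by rw [hLmin]; simp
  -- pigeonhole: some a in [1, 2^k] is not a floor value
  set I : Finset ℤ := Finset.image (fun t => ⌊L t⌋) Finset.univ with hI_def
  have hIcard : I.card ≤ k := le_trans Finset.card_image_le (by simp)
  have hTcard : (Finset.Icc (1:ℤ) (2^k)).card = 2^k := by
    rw [Int.card_Icc, show ((2:ℤ)^k + 1 - 1) = (((2^k : ℕ) : ℤ)) by push_cast; ring,
      Int.toNat_natCast]
  have hlt : I.card < (Finset.Icc (1:ℤ) (2^k)).card := by
    rw [hTcard]; exact lt_of_le_of_lt hIcard (Nat.lt_two_pow_self (n := k))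
  have hnsub : ¬ (Finset.Icc (1:ℤ) (2^k)) ⊆ I := fun h =>
    absurd (Finset.card_le_card h) (not_le.mpr hlt)
  obtain ⟨a, haT, haI⟩ := Finset.not_subset.mp hnsub
  obtain ⟨ha1, ha2⟩ := Finset.mem_Icc.mp haT
  have haI' : ∀ t, ⌊L t⌋ ≠ a := by
    intro t h
    exact haI (Finset.mem_image.mpr ⟨t, Finset.mem_univ t, h⟩)
  refine ⟨Finset.univ.filter (fun t => a < ⌊L t⌋), ?_, ?_, ?_⟩
  · refine ⟨imax, ?_⟩
    simp only [Finset.mem_filter, Finset.mem_univ, true_and, hfmax]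
    exact lt_of_le_of_ne ha2 (fun h => haI' imax (hfmax.trans h.symm))
  · refine ⟨imin, ?_⟩
    simp only [Finset.mem_compl, Finset.mem_filter, Finset.mem_univ, true_and, hfmin]
    omega
  · intro i hi j hj
    simp only [Finset.mem_filter, Finset.mem_univ, true_and] at hi
    simp only [Finset.mem_compl, Finset.mem_filter, Finset.mem_univ, true_and, not_lt] at hj
    have hji : ⌊L j⌋ + 1 ≤ a := by
      have := haI' j; omega
    -- y j < g ^ a
    have hyj : y j < g ^ (a : ℝ) := by
      calc y j = g ^ (L j) := (hyinv j).symm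
        _ < g ^ ((⌊L j⌋ : ℝ) + 1) :=
          Real.rpow_lt_rpow_of_exponent_lt hg1 (Int.lt_floor_add_one _)
        _ ≤ g ^ (a : ℝ) := by
          apply Real.rpow_le_rpow_of_exponent_le hg1.le
          exact_mod_cast hji
    -- g ^ (a+1) ≤ y i
    have hyi : g ^ ((a : ℝ) + 1) ≤ y i := by
      calc g ^ ((a:ℝ) + 1) ≤ g ^ ((⌊L i⌋ : ℝ)) := by
            apply Real.rpow_le_rpow_of_exponent_le hg1.le
            exact_mod_cast hi
        _ ≤ g ^ (L i) :=
          Real.rpow_le_rpow_of_exponent_le hg1.le (Int.floor_le _)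
        _ = y i := hyinv i
    have key : g ≤ y i / y j := by
      rw [le_div_iff₀ (hy0 j)]
      calc g * y j ≤ g * g ^ (a:ℝ) := by nlinarith [hyj, hg0]
        _ = g ^ ((a:ℝ) + 1) := by
            rw [Real.rpow_add hg0, Real.rpow_one]; ring
        _ ≤ y i := hyi
    have hxy : y i / y j = x i / x j := by
      rw [hy_def]; field_simp
    rwa [hxy] at key
end
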